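/- Let p, q be integers with 3 ≤ p ≤ q, 1/p + 1/q < 1/2, and define D₂(k,k') = |sin(k'π/q)sin(kπ/q)·cosh(2c) − cos(kπ/q)cos(k'π/q)| where cosh(2c) = (2cos²(π/p) + cos²(π/q) − 1)/(1 − cos²(π/q)). Then D₂(1,2) = cos(π/q)(4cos²(π/p) − 1), D₂(1,q−1) = 2cos²(π/p) + 2cos²(π/q) − 1, D₂(1,3) = 8cos²(π/q)cos²(π/p) − 2cos²(π/p) − 2cos²(π/q) + 1, and D₂(2,2) = 8cos²(π/q)cos²(π/p) − 1. -/

import Mathlib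

open Real

set_option maxHeartbeats 1000000 in
theorem stmt_7 (p q : ℕ) (hp : 3 ≤ p) (hpq : p ≤ q)
    (h : (1:ℝ)/p + 1/q < 1/2)
    (Ch : ℝ)
    (hCh : Ch = (2 * Real.cos (π / p) ^ 2 + Real.cos (π / q) ^ 2 - 1)
        / (1 - Real.cos (π / q) ^ 2))
    (D₂ : ℕ → ℕ → ℝ)
    (hD₂ : ∀ k k' : ℕ, D₂ k k'
      = |Real.sin (k' * π / q) * Real.sin (k * π / q) * Ch
          - Real.cos (k * π / q) * Real.cos (k' * π / q)|) :
    D₂ 1 2 = Real.cos (π / q) * (4 * Real.cos (π / p) ^ 2 - 1) ∧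
    D₂ 1 (q - 1) = 2 * Real.cos (π / p) ^ 2 + 2 * Real.cos (π / q) ^ 2 - 1 ∧
    D₂ 1 3 = 8 * Real.cos (π / q) ^ 2 * Real.cos (π / p) ^ 2
        - 2 * Real.cos (π / p) ^ 2 - 2 * Real.cos (π / q) ^ 2 + 1 ∧
    D₂ 2 2 = 8 * Real.cos (π / q) ^ 2 * Real.cos (π / p) ^ 2 - 1 := by
  -- basic bounds
  have hq5 : 5 ≤ q := by
    by_contra hq
    push_neg at hq
    have hq4 : q ≤ 4 := by omega
    have hp4 : p ≤ 4 := le_trans hpq hq4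
    have hppos : (0:ℝ) < p := by positivity
    have hqpos : (0:ℝ) < q := by
      have : 3 ≤ q := le_trans hp hpq
      positivity
    have h1 : (1:ℝ)/4 ≤ 1/p := by
      apply one_div_le_one_div_of_le hppos
      exact_mod_cast hp4
    have h2 : (1:ℝ)/4 ≤ 1/q := by
      apply one_div_le_one_div_of_le hqpos
      exact_mod_cast hq4
    linarith
  have hqpos : (0:ℝ) < q := by positivity
  have hppos : (0:ℝ) < p := by positivity
  set a := Real.cos (π / p) with ha
  set c := Real.cos (π / q) with hc
  set s := Real.sin (π / q) with hs
  have hπqpos : 0 < π / q := div_pos Real.pi_pos hqpos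
  have hπqlt : π / q < π / 4 := by
    apply div_lt_div_of_pos_left Real.pi_pos (by norm_num)
    exact_mod_cast (by omega : 4 < q)
  have hπqlt2 : π / q < π := by
    have : π / 4 < π := by linarith [Real.pi_pos]
    linarith
  have hspos : 0 < s := Real.sin_pos_of_pos_of_lt_pi hπqpos hπqlt2
  have hcgt : Real.cos (π / 4) < c := by
    apply Real.cos_lt_cos_of_nonneg_of_le_pi hπqpos.le (by linarith [Real.pi_pos]) hπqlt
  rw [Real.cos_pi_div_four] at hcgt
  have hc2 : (1:ℝ)/2 < c ^ 2 := by
    have h0 : (0:ℝ) < Real.sqrt 2 / 2 := by positivity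
    nlinarith [Real.sq_sqrt (by norm_num : (2:ℝ) ≥ 0)]
  have hage : (1:ℝ)/2 ≤ a := by
    have hπple : π / p ≤ π / 3 := by
      apply div_le_div_of_nonneg_left Real.pi_pos.le (by norm_num)
      exact_mod_cast hp
    have h3pi : π / 3 ≤ π := by linarith [Real.pi_pos]
    have := Real.cos_le_cos_of_nonneg_of_le_pi (by positivity : (0:ℝ) ≤ π/p) h3pi hπple
    rw [Real.cos_pi_div_three] at this
    exact this
  have ha2 : (1:ℝ)/4 ≤ a ^ 2 := by nlinarith
  have hsc : s ^ 2 = 1 - c ^ 2 := by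
    have := Real.sin_sq_add_cos_sq (π / q)
    linarith
  have hs2ne : s ^ 2 ≠ 0 := by positivity
  have hkey : s ^ 2 * Ch = 2 * a ^ 2 + c ^ 2 - 1 := by
    rw [hCh, ← hsc]
    field_simp
  -- angle formulas
  have h2θ : (2:ℝ) * π / q = 2 * (π / q) := by ring
  have h3θ : (3:ℝ) * π / q = 3 * (π / q) := by ring
  have hsin2 : Real.sin (2 * π / q) = 2 * s * c := by
    rw [h2θ, Real.sin_two_mul]
  have hcos2 : Real.cos (2 * π / q) = 2 * c ^ 2 - 1 := by
    rw [h2θ, Real.cos_two_mul]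
  have hsin3 : Real.sin (3 * π / q) = 3 * s - 4 * s ^ 3 := by
    rw [h3θ, Real.sin_three_mul]
  have hcos3 : Real.cos (3 * π / q) = 4 * c ^ 3 - 3 * c := by
    rw [h3θ, Real.cos_three_mul]
  have hq1 : ((q - 1 : ℕ) : ℝ) * π / q = π - π / q := by
    have : ((q - 1 : ℕ) : ℝ) = (q : ℝ) - 1 := by
      have : (1:ℕ) ≤ q := by omega
      push_cast [Nat.cast_sub this]
      ring
    rw [this]
    field_simp
  have hsinq1 : Real.sin (((q - 1 : ℕ) : ℝ) * π / q) = s := by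
    rw [hq1, Real.sin_pi_sub]
  have hcosq1 : Real.cos (((q - 1 : ℕ) : ℝ) * π / q) = -c := by
    rw [hq1, Real.cos_pi_sub]
  have hcpos : 0 < c := lt_trans (by positivity) hcgt
  have h1q : (1:ℝ) * π / q = π / q := by ring
  refine ⟨?_, ?_, ?_, ?_⟩
  · rw [hD₂]
    push_cast
    rw [hsin2, h1q, hcos2, ← hs, ← hc]
    have e : 2 * s * c * s * Ch - c * (2*c^2-1) = c * (4 * a ^ 2 - 1) := by
      linear_combination (2*c) * hkey
    rw [e, abs_of_nonneg]
    exact mul_nonneg hcpos.le (by linarith)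
  · rw [hD₂]
    push_cast [hsinq1, hcosq1]
    rw [h1q, ← hs, ← hc]
    have e : s * s * Ch - c * -c = 2 * a ^ 2 + 2 * c ^ 2 - 1 := by
      linear_combination hkey
    rw [e, abs_of_nonneg]
    linarith
  · rw [hD₂]
    push_cast
    rw [hsin3, h1q, hcos3, ← hs, ← hc]
    have e : (3*s - 4*s^3) * s * Ch - c * (4*c^3 - 3*c)
        = 8 * c ^ 2 * a ^ 2 - 2 * a ^ 2 - 2 * c ^ 2 + 1 := by
      linear_combination (4*c^2-1) * hkey + (-4*s^2*Ch) * hsc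
    rw [e, abs_of_nonneg]
    nlinarith [mul_nonneg (by linarith : (0:ℝ) ≤ a^2 - 1/4) (by linarith : (0:ℝ) ≤ 4*c^2 - 1)]
  · rw [hD₂]
    push_cast
    rw [hsin2, hcos2]
    have e : 2*s*c * (2*s*c) * Ch - (2*c^2-1) * (2*c^2-1)
        = 8 * c ^ 2 * a ^ 2 - 1 := by
      linear_combination (4*c^2) * hkey
    rw [e, abs_of_nonneg]
    nlinarith [mul_nonneg (by linarith : (0:ℝ) ≤ a^2 - 1/4) (by positivity : (0:ℝ) ≤ c^2)]
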